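/- Suppose the channel quality offsets are generic. Then for every price vector p ∈ ℝ^J with p_j > 0 for all j, the number of undecided users, i.e. the cardinality of { i : the preference set J_i(p) = { j : p_j/c_{ij} = min_{k ∈ {1,…,J}} p_k/c_{ik} } has at least two elements }, is strictly less than J. -/

import Mathlib

open SimpleGraph Walk

section Forest
variable {V : Type*} [Fintype V] [DecidableEq V] {G : SimpleGraph V}

private lemma path_concat {u a b : V} {q : G.Walk u a} (hq : q.IsPath)
    (hab : G.Adj a b) (hb : b ∉ q.support) : (q.concat hab).IsPath := by
  rw [← isPath_reverse_iff, reverse_concat]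
  rw [cons_isPath_iff]
  refine ⟨hq.reverse, ?_⟩
  rw [support_reverse, List.mem_reverse]
  exact hb

/-- In an acyclic graph, adjacent vertices have different distance from a
common basepoint they are both reachable from. -/
private lemma dist_ne_of_adj (hG : G.IsAcyclic) {r a b : V}
    (hra : G.Reachable r a) (hab : G.Adj a b) :
    G.dist r a ≠ G.dist r b := by
  intro heq
  obtain ⟨pa, hpa, hla⟩ := hra.exists_path_of_dist
  obtain ⟨pb, hpb, hlb⟩ := (hra.trans hab.reachable).exists_path_of_dist
  by_cases hb : b ∈ pa.support
  · -- takeUntil gives a path r → b ; uniqueness forces it to be all of pa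
    have hq : (pa.takeUntil b hb).IsPath := hpa.takeUntil _
    have hval : pa.takeUntil b hb = pb :=
      congrArg Subtype.val (hG.path_unique ⟨pa.takeUntil b hb, hq⟩ ⟨pb, hpb⟩)
    have hlen : (pa.takeUntil b hb).length = G.dist r b := by rw [hval, hlb]
    have hspec := congrArg Walk.length (pa.take_spec hb)
    rw [Walk.length_append] at hspec
    have : (pa.dropUntil b hb).length = 0 := by omega
    exact hab.ne (Walk.eq_of_length_eq_zero this).symm
  · have hq : (pa.concat hab).IsPath := path_concat hpa hab hb
    have hval : pa.concat hab = pb :=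
      congrArg Subtype.val (hG.path_unique ⟨pa.concat hab, hq⟩ ⟨pb, hpb⟩)
    have := congrArg Walk.length hval
    rw [Walk.length_concat] at this
    omega

/-- In an acyclic graph, a vertex cannot have two distinct neighbours that are
both strictly closer to a common basepoint. -/
private lemma no_two_closer (hG : G.IsAcyclic) {r u x y : V}
    (hrx : G.Reachable r x) (hry : G.Reachable r y)
    (hxu : G.Adj x u) (hyu : G.Adj y u) (hxy : x ≠ y)
    (hdx : G.dist r x < G.dist r u) (hdy : G.dist r y < G.dist r u) : False := by
  obtain ⟨px, hpx, hlx⟩ := hrx.exists_path_of_dist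
  obtain ⟨py, hpy, hly⟩ := hry.exists_path_of_dist
  have hux : u ∉ px.support := by
    intro h
    have h1 := px.length_takeUntil_le h
    have h2 := SimpleGraph.dist_le (px.takeUntil u h)
    omega
  have huy : u ∉ py.support := by
    intro h
    have h1 := py.length_takeUntil_le h
    have h2 := SimpleGraph.dist_le (py.takeUntil u h)
    omega
  have hqx : (px.concat hxu).IsPath := path_concat hpx hxu hux
  have hqy : (py.concat hyu).IsPath := path_concat hpy hyu huy
  have hval : px.concat hxu = py.concat hyu :=
    congrArg Subtype.val (hG.path_unique ⟨px.concat hxu, hqx⟩ ⟨py.concat hyu, hqy⟩)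
  have := congrArg (fun w => w.reverse.getVert 1) hval
  simp only [reverse_concat, getVert_cons_succ, getVert_zero] at this
  exact hxy this

/-- An acyclic graph on a finite nonempty vertex type has fewer edges than
vertices. -/
lemma acyclic_edge_count [Nonempty V] (hG : G.IsAcyclic) :
    G.edgeSet.ncard < Fintype.card V := by
  classical
  set r : V → V := fun v => Quot.out (G.connectedComponentMk v) with hr_def
  have hreach : ∀ v, G.Reachable (r v) v := fun v =>
    SimpleGraph.ConnectedComponent.exact (Quot.out_eq _)
  have hr_adj : ∀ {a b : V}, G.Adj a b → r a = r b := by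
    intro a b hab
    exact congrArg Quot.out (SimpleGraph.ConnectedComponent.connectedComponentMk_eq_of_adj hab)
  set d : V → ℕ := fun v => G.dist (r v) v with hd_def
  -- the endpoint functions
  set φ : Sym2 V → V := fun e => if d e.out.1 < d e.out.2 then e.out.2 else e.out.1 with hφ
  set ψ : Sym2 V → V := fun e => if d e.out.1 < d e.out.2 then e.out.1 else e.out.2 with hψ
  have hmk : ∀ e : Sym2 V, s(ψ e, φ e) = e := by
    intro e
    by_cases h : d e.out.1 < d e.out.2 <;>
      simp only [hφ, hψ, if_pos, if_neg, h, ite_true, ite_false]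
    · exact e.out_eq
    · rw [Sym2.eq_swap]; exact e.out_eq
  have hadj : ∀ e ∈ G.edgeSet, G.Adj (ψ e) (φ e) := by
    intro e he
    rw [← SimpleGraph.mem_edgeSet, hmk e]
    exact he
  have hlt : ∀ e ∈ G.edgeSet, d (ψ e) < d (φ e) := by
    intro e he
    have hadj' := hadj e he
    have hrr : r (ψ e) = r (φ e) := hr_adj hadj'
    have hne : d (ψ e) ≠ d (φ e) := by
      have := dist_ne_of_adj hG (hreach (ψ e)) hadj'
      simpa [hd_def, hrr] using this
    by_cases h : d e.out.1 < d e.out.2 <;>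
      simp only [hφ, hψ, h, ite_true, ite_false] at hne ⊢ <;> omega
  -- φ is injective on the edge set
  have hinj : Set.InjOn φ G.edgeSet := by
    intro e1 he1 e2 he2 h12
    by_contra hne
    have hψne : ψ e1 ≠ ψ e2 := by
      intro h
      apply hne
      rw [← hmk e1, ← hmk e2, h, h12]
    set u := φ e1 with hu
    have h1 := hadj e1 he1
    have h2 := hadj e2 he2
    rw [← h12] at h2
    have hd1 := hlt e1 he1
    have hd2 := hlt e2 he2
    rw [← h12] at hd2
    have hr1 : r (ψ e1) = r u := hr_adj h1
    have hr2 : r (ψ e2) = r u := hr_adj h2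
    exact no_two_closer hG (hr1 ▸ hreach (ψ e1)) (hr2 ▸ hreach (ψ e2))
      h1 h2 hψne (by simpa [hd_def, hr1] using hd1) (by simpa [hd_def, hr2] using hd2)
  -- count
  have hmaps : ∀ e ∈ G.edgeSet, φ e ∈ {v : V | 0 < d v} := by
    intro e he
    have := hlt e he
    simp only [Set.mem_setOf_eq]
    omega
  have hssub : {v : V | 0 < d v} ⊂ Set.univ := by
    refine (Set.ssubset_univ_iff).mpr ?_
    intro h
    obtain ⟨v⟩ := (inferInstance : Nonempty V)
    have h0 : d (r v) = 0 := by
      have : r (r v) = r v := congrArg Quot.out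
        (SimpleGraph.ConnectedComponent.sound (hreach v))
      simp [hd_def, this, SimpleGraph.dist_self]
    have : r v ∈ {v : V | 0 < d v} := h ▸ Set.mem_univ _
    simp only [Set.mem_setOf_eq] at this
    omega
  calc G.edgeSet.ncard ≤ ({v : V | 0 < d v}).ncard :=
        Set.ncard_le_ncard_of_injOn φ hmaps hinj (Set.toFinite _)
    _ < (Set.univ : Set V).ncard := Set.ncard_lt_ncard hssub (Set.toFinite _)
    _ = Fintype.card V := by rw [Set.ncard_univ, Nat.card_eq_fintype_card]

end Forest

private lemma getVert_eq_getElem {V : Type*} {G : SimpleGraph V} {u v : V}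
    (w : G.Walk u v) (i : ℕ) (hi : i ≤ w.length) :
    w.getVert i = w.support[i]'(by rw [Walk.length_support]; omega) := by
  induction w generalizing i with
  | nil =>
    have : i = 0 := by simpa using hi
    subst this
    simp [Walk.getVert]
  | cons h q ih =>
    cases i with
    | zero => simp [Walk.getVert]
    | succ i =>
      rw [Walk.getVert_cons_succ]
      simp only [Walk.support_cons, List.getElem_cons_succ]
      exact ih i (by simpa [Walk.length_cons] using hi)

private lemma cycle_getVert_inj {V : Type*} {G : SimpleGraph V} {v : V}
    {w : G.Walk v v} (hw : w.IsCycle) {a b : ℕ}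
    (ha : a < w.length) (hb : b < w.length) (h : w.getVert a = w.getVert b) :
    a = b := by
  have hnd : w.support.tail.Nodup := hw.2
  have hlen : w.support.tail.length = w.length := by
    have := w.length_support
    rw [List.length_tail, this]
    omega
  have htail : ∀ (i : ℕ) (_h1 : 1 ≤ i) (h2 : i ≤ w.length),
      w.getVert i = w.support.tail[i-1]'(by omega) := by
    intro i h1 h2
    rw [getVert_eq_getElem w i h2]
    have h3 := List.getElem_tail (l := w.support) (i := i - 1)
      (h := by rw [List.length_tail, w.length_support]; omega)
    simp only [show i - 1 + 1 = i from by omega] at h3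
    exact h3.symm
  have key : ∀ i j : ℕ, 1 ≤ i → i ≤ w.length → 1 ≤ j → j ≤ w.length →
      w.getVert i = w.getVert j → i = j := by
    intro i j h1 h2 h3 h4 hij
    rw [htail i h1 h2, htail j h3 h4] at hij
    have := (List.Nodup.getElem_inj_iff hnd).mp hij
    omega
  rcases Nat.eq_zero_or_pos a with ha0 | ha1
  · rcases Nat.eq_zero_or_pos b with hb0 | hb1
    · omega
    · subst ha0
      have h0 : w.getVert w.length = w.getVert b := by
        rw [Walk.getVert_length, ← h, Walk.getVert_zero]
      have := key w.length b (by omega) le_rfl hb1 (by omega) h0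
      omega
  · rcases Nat.eq_zero_or_pos b with hb0 | hb1
    · subst hb0
      have h0 : w.getVert a = w.getVert w.length := by
        rw [Walk.getVert_length, h, Walk.getVert_zero]
      have := key a w.length ha1 (by omega) (by omega) le_rfl h0
      omega
    · exact key a b ha1 (by omega) hb1 (by omega) h

/-- The channel quality offsets are generic: no cycle of distinct users and
distinct providers has offset-ratio product equal to one. -/
def Generic {I J : ℕ} (c : Fin I → Fin J → ℝ) : Prop :=
  ∀ (n : ℕ) (_hn : 2 ≤ n) (ii : Fin n → Fin I) (jj : Fin n → Fin J),
    Function.Injective ii → Function.Injective jj →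
    ∏ k : Fin n, c (ii k) (jj (k - ⟨1, by omega⟩)) / c (ii k) (jj k) ≠ 1

/-- If the channel quality offsets are generic, then for
every positive price vector `p` the number of undecided users (those whose
preference set has at least two elements) is strictly less than `J`. -/
theorem number_of_undecided_users_lt_providers
    (I J : ℕ) (hI : 0 < I) (hJ : 0 < J)
    (c : Fin I → Fin J → ℝ) (hc : ∀ i j, 0 < c i j)
    (hgen : Generic c)
    (p : Fin J → ℝ) (hp : ∀ j, 0 < p j) :
    Set.ncard {i : Fin I |
      1 < Set.ncard {j : Fin J | p j / c i j = ⨅ k : Fin J, p k / c i k}} < J := by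
  classical
  haveI : Nonempty (Fin J) := ⟨⟨0, hJ⟩⟩
  let T : Fin I → Set (Fin J) := fun i => {j | p j / c i j = ⨅ k : Fin J, p k / c i k}
  let U : Set (Fin I) := {i | 1 < (T i).ncard}
  show U.ncard < J
  have hmem : ∀ (i : Fin I) (j : Fin J), j ∈ T i →
      p j / c i j = ⨅ k : Fin J, p k / c i k := fun i j h => h
  -- the basic algebraic consequence of a tie
  have hKey1 : ∀ (i : Fin I) (j j' : Fin J), p j / c i j = p j' / c i j' →
      c i j / c i j' = p j / p j' := by
    intro i j j' h
    rw [div_eq_div_iff (hc i j).ne' (hc i j').ne'] at h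
    rw [div_eq_div_iff (hc i j').ne' (hp j').ne']
    linarith [h]
  -- no two distinct users tie the same pair of providers
  have hKey2 : ∀ (i i' : Fin I) (x y : Fin J), i ≠ i' → x ≠ y →
      x ∈ T i → y ∈ T i → x ∈ T i' → y ∈ T i' → False := by
    intro i i' x y hii hxy hxi hyi hxi' hyi'
    have inj1 : Function.Injective ![i, i'] := by
      intro a b hab
      fin_cases a <;> fin_cases b <;> simp_all
    have inj2 : Function.Injective ![x, y] := by
      intro a b hab
      fin_cases a <;> fin_cases b <;> simp_all
    have hprod2 : ∏ k : Fin 2,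
        c (![i, i'] k) (![x, y] (k - ⟨1, by omega⟩)) / c (![i, i'] k) (![x, y] k) = 1 := by
      rw [Fin.prod_univ_two]
      have h0 : (0 : Fin 2) - (⟨1, Nat.one_lt_two⟩ : Fin 2) = (1 : Fin 2) := rfl
      have h1 : (1 : Fin 2) - (⟨1, Nat.one_lt_two⟩ : Fin 2) = (0 : Fin 2) := rfl
      rw [h0, h1]
      simp only [Matrix.cons_val_zero, Matrix.cons_val_one, Matrix.head_cons]
      rw [hKey1 i y x ((hmem i y hyi).trans (hmem i x hxi).symm),
        hKey1 i' x y ((hmem i' x hxi').trans (hmem i' y hyi').symm)]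
      field_simp
      rw [mul_comm (p y) (p x)]
      exact div_self (ne_of_gt (mul_pos (hp x) (hp y)))
    exact hgen 2 le_rfl ![i, i'] ![x, y] inj1 inj2 hprod2
  -- choose a tied pair of providers for each undecided user
  have hex : ∀ i : Fin I, ∃ a b : Fin J, i ∈ U → a ≠ b ∧ a ∈ T i ∧ b ∈ T i := by
    intro i
    by_cases hi : i ∈ U
    · obtain ⟨a, b, ha, hb, hab⟩ := (Set.one_lt_ncard_iff (Set.toFinite (T i))).mp hi
      exact ⟨a, b, fun _ => ⟨hab, ha, hb⟩⟩
    · exact ⟨⟨0, hJ⟩, ⟨0, hJ⟩, fun h => absurd h hi⟩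
  choose A B hAB using hex
  let ei : Fin I → Sym2 (Fin J) := fun i => s(A i, B i)
  -- the tie graph on providers
  let GG : SimpleGraph (Fin J) :=
    { Adj := fun x y => x ≠ y ∧ ∃ i, i ∈ U ∧ ei i = s(x, y)
      symm := ⟨by
        rintro x y ⟨h1, i, hi, h2⟩
        exact ⟨h1.symm, i, hi, h2.trans (Sym2.eq_swap)⟩⟩
      loopless := ⟨fun x h => h.1 rfl⟩ }
  -- the tie graph is acyclic, by genericity
  have hacyc : GG.IsAcyclic := by
    intro v w hw
    have hn3 : 3 ≤ w.length := hw.three_le_length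
    set n := w.length with hn
    have hn1 : 1 < n := by omega
    set jj : Fin n → Fin J := fun k => w.getVert k.val with hjjdef
    set sub1 : Fin n → Fin n := fun k => k - ⟨1, hn1⟩ with hsub1def
    have hsubval : ∀ k : Fin n, (sub1 k).val =
        if k.val = 0 then n - 1 else k.val - 1 := by
      intro k
      have hk := k.isLt
      simp only [hsub1def, Fin.sub_def]
      by_cases h0 : k.val = 0
      · rw [h0]
        simp only [if_pos rfl]
        exact Nat.mod_eq_of_lt (by omega)
      · rw [if_neg h0]
        rw [show n - 1 + k.val = (k.val - 1) + n from by omega, Nat.add_mod_right]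
        exact Nat.mod_eq_of_lt (by omega)
    have hjj : Function.Injective jj := by
      intro k l h
      exact Fin.ext (cycle_getVert_inj hw k.isLt l.isLt h)
    have hadjk : ∀ k : Fin n, GG.Adj (jj (sub1 k)) (jj k) := by
      intro k
      by_cases h0 : k.val = 0
      · have h := w.adj_getVert_succ (i := n - 1) (by omega)
        rw [show n - 1 + 1 = n from by omega] at h
        have hgl : w.getVert n = v := w.getVert_length
        have hg0 : w.getVert k.val = v := by rw [h0]; exact w.getVert_zero
        simp only [hjjdef, hsubval k, if_pos h0, hg0, hgl] at h ⊢
        exact h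
      · have h := w.adj_getVert_succ (i := k.val - 1) (by have := k.isLt; omega)
        rw [show k.val - 1 + 1 = k.val from by omega] at h
        simp only [hjjdef, hsubval k, if_neg h0]
        exact h
    -- pick a user for each edge of the cycle
    have hexu : ∀ k : Fin n, ∃ i, i ∈ U ∧ ei i = s(jj (sub1 k), jj k) :=
      fun k => (hadjk k).2
    choose ii hiU hie using hexu
    have hii : Function.Injective ii := by
      intro k l hkl
      have hsym : s(jj (sub1 k), jj k) = s(jj (sub1 l), jj l) := by
        rw [← hie k, ← hie l, hkl]
      rw [Sym2.eq_iff] at hsym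
      rcases hsym with ⟨h1, h2⟩ | ⟨h1, h2⟩
      · exact hjj h2
      · exfalso
        have e1 := congrArg Fin.val (hjj h1)
        have e2 := congrArg Fin.val (hjj h2)
        rw [hsubval k] at e1
        rw [hsubval l] at e2
        have hk := k.isLt
        have hl := l.isLt
        split_ifs at e1 e2 <;> omega
    -- both endpoints of each cycle edge are ties for the chosen user
    have hTie : ∀ k : Fin n,
        p (jj (sub1 k)) / c (ii k) (jj (sub1 k)) = p (jj k) / c (ii k) (jj k) := by
      intro k
      have h := hie k
      have habm := hAB (ii k) (hiU k)
      have hA := hmem (ii k) _ habm.2.1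
      have hB := hmem (ii k) _ habm.2.2
      rw [show ei (ii k) = s(A (ii k), B (ii k)) from rfl, Sym2.eq_iff] at h
      rcases h with ⟨h1, h2⟩ | ⟨h1, h2⟩
      · rw [← h1, ← h2]
        exact hA.trans hB.symm
      · rw [← h1, ← h2]
        exact hB.trans hA.symm
    have hprod : ∏ k : Fin n,
        c (ii k) (jj (k - ⟨1, hn1⟩)) / c (ii k) (jj k) = 1 := by
      haveI : NeZero n := ⟨by omega⟩
      have hperm : ∏ k : Fin n, p (jj (sub1 k)) = ∏ k : Fin n, p (jj k) :=
        Equiv.prod_comp (Equiv.subRight (⟨1, hn1⟩ : Fin n)) (fun k => p (jj k))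
      calc ∏ k : Fin n, c (ii k) (jj (k - ⟨1, hn1⟩)) / c (ii k) (jj k)
          = ∏ k : Fin n, p (jj (sub1 k)) / p (jj k) := by
            refine Finset.prod_congr rfl fun k _ => ?_
            exact hKey1 (ii k) _ _ (hTie k)
        _ = (∏ k : Fin n, p (jj (sub1 k))) / ∏ k : Fin n, p (jj k) :=
            Finset.prod_div_distrib _ _
        _ = 1 := by
            rw [hperm]
            exact div_self (ne_of_gt (Finset.prod_pos fun k _ => hp _))
    exact hgen n (by omega) ii jj hii hjj hprod
  -- counting
  have hUe : ∀ i ∈ U, ei i ∈ GG.edgeSet := by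
    intro i hi
    exact (GG.mem_edgeSet).mpr ⟨(hAB i hi).1, ⟨i, hi, rfl⟩⟩
  have hinjU : Set.InjOn ei U := by
    intro i hi i' hi' heq
    by_contra hne
    have : s(A i, B i) = s(A i', B i') := heq
    rw [Sym2.eq_iff] at this
    have habi := hAB i hi
    have habi' := hAB i' hi'
    rcases this with ⟨h1, h2⟩ | ⟨h1, h2⟩
    · refine hKey2 i i' (A i) (B i) hne habi.1 habi.2.1 habi.2.2 ?_ ?_
      · rw [h1]; exact habi'.2.1
      · rw [h2]; exact habi'.2.2
    · refine hKey2 i i' (A i) (B i) hne habi.1 habi.2.1 habi.2.2 ?_ ?_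
      · rw [h1]; exact habi'.2.2
      · rw [h2]; exact habi'.2.1
  calc U.ncard ≤ GG.edgeSet.ncard :=
        Set.ncard_le_ncard_of_injOn ei hUe hinjU (Set.toFinite _)
    _ < Fintype.card (Fin J) := acyclic_edge_count hacyc
    _ = J := Fintype.card_fin J
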